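/- Let P be the companion matrix of a primitive polynomial of degree k+h over F_q with 1 ≤ h < k, let 1 ≤ a < b ≤ q^{k+h} - 1, and let k+1 ≤ m < k+h. Consider the (m)-row matrices A_a and A_b over F_q of size m×(2k+h), where A_c = [I_k | (P^c)^{(k)}; 0 | (P^c)^{[k+1,m]}] (first k rows being [I_k, first k rows of P^c], remaining m-k rows being [0, rows k+1 through m of P^c]). Then the rank of the vertical stack of A_a and A_b is at least m + k. Consequently d_S(rs(A_a), rs(A_b)) ≥ 2k. -/

import Mathlib

set_option maxHeartbeats 1000000

/-- The companion matrix of a monic polynomial of degree `k`. -/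
def companionMat {F : Type*} [Field F] {k : ℕ} (a : Fin k → F) :
    Matrix (Fin k) (Fin k) F :=
  fun i j => if (i : ℕ) + 1 = k then -a j else if (j : ℕ) = (i : ℕ) + 1 then 1 else 0

/-- The subspace distance `d_S(U,V) = dim(U+V) - dim(U∩V)`. -/
noncomputable def subspaceDist {𝔽 : Type*} [Field 𝔽] {n : ℕ}
    (U V : Submodule 𝔽 (Fin n → 𝔽)) : ℕ :=
  Module.finrank 𝔽 ↥(U ⊔ V) - Module.finrank 𝔽 ↥(U ⊓ V)


open Polynomial in
lemma aux_isUnit_sub {𝔽 : Type*} [Field 𝔽] [Fintype 𝔽] {n : ℕ} (hn : 0 < n)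
    (P : Matrix (Fin n) (Fin n) 𝔽)
    (hprim : orderOf P = Fintype.card 𝔽 ^ n - 1)
    {c : ℕ} (hc1 : 0 < c) (hc2 : c < Fintype.card 𝔽 ^ n - 1) :
    IsUnit (P ^ c - 1) := by
  classical
  set q := Fintype.card 𝔽 with hq
  set N := q ^ n - 1 with hN
  have hq2 : 2 ≤ q := Fintype.one_lt_card
  have hqn : 2 ≤ q ^ n := le_trans hq2 (Nat.le_self_pow hn.ne' q)
  have hN1 : 1 ≤ N := by omega
  haveI : Nonempty (Fin n) := ⟨⟨0, hn⟩⟩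
  have hint : IsIntegral 𝔽 P := Matrix.isIntegral P
  set μ := minpoly 𝔽 P with hμ
  have hμ0 : μ ≠ 0 := minpoly.ne_zero hint
  have hd : μ.natDegree ≤ n := by
    have h1 := Polynomial.natDegree_le_of_dvd (Matrix.minpoly_dvd_charpoly P)
      (Matrix.charpoly_monic P).ne_zero
    rwa [Matrix.charpoly_natDegree_eq_dim, Fintype.card_fin] at h1
  have hker : ∀ f ∈ Ideal.span ({μ} : Set 𝔽[X]), Polynomial.aeval P f = 0 := by
    intro f hf
    obtain ⟨g, rfl⟩ := Ideal.mem_span_singleton.mp hf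
    rw [map_mul, minpoly.aeval, zero_mul]
  set ψ : AdjoinRoot μ →+* Matrix (Fin n) (Fin n) 𝔽 :=
    Ideal.Quotient.lift (Ideal.span {μ}) (Polynomial.aeval P).toRingHom hker with hψ
  have hψmk : ∀ g : 𝔽[X], ψ (AdjoinRoot.mk μ g) = Polynomial.aeval P g := fun g => rfl
  have hinj : Function.Injective ψ := by
    rw [injective_iff_map_eq_zero]
    intro s hs
    obtain ⟨g, rfl⟩ := AdjoinRoot.mk_surjective s
    rw [hψmk] at hs
    exact AdjoinRoot.mk_eq_zero.mpr (minpoly.dvd 𝔽 P hs)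
  set pb := AdjoinRoot.powerBasis hμ0 with hpb
  haveI : Fintype (AdjoinRoot μ) := Module.fintypeOfFintype pb.basis
  have hcard : Fintype.card (AdjoinRoot μ) = q ^ pb.dim := by
    rw [Module.card_fintype pb.basis, Fintype.card_fin]
  have hdim : pb.dim = μ.natDegree := rfl
  have hcardle : Fintype.card (AdjoinRoot μ) ≤ q ^ n := by
    rw [hcard]; exact Nat.pow_le_pow_right (by omega) (hdim ▸ hd)
  have hψr : ψ (AdjoinRoot.root μ) = P := by
    rw [show AdjoinRoot.root μ = AdjoinRoot.mk μ Polynomial.X from rfl, hψmk, Polynomial.aeval_X]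
  have hord : orderOf (AdjoinRoot.root μ) = N := by
    have h2 := orderOf_injective ψ.toMonoidHom hinj (AdjoinRoot.root μ)
    rw [show (ψ.toMonoidHom (AdjoinRoot.root μ)) = P from hψr, hprim] at h2
    exact h2.symm
  have hnt : Nontrivial (AdjoinRoot μ) := by
    refine ⟨0, 1, fun h01 => ?_⟩
    have := congrArg ψ h01
    rw [map_zero, map_one] at this
    exact zero_ne_one this
  have hrN : (AdjoinRoot.root μ) ^ N = 1 := hord ▸ pow_orderOf_eq_one _
  have hrunit : IsUnit (AdjoinRoot.root μ) := IsUnit.of_pow_eq_one hrN (by omega)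
  obtain ⟨u, hu⟩ := hrunit
  have hordu : orderOf u = N := by rw [← orderOf_units, hu, hord]
  have hdvd : N ∣ Fintype.card (AdjoinRoot μ)ˣ := hordu ▸ orderOf_dvd_card
  have hNle : N ≤ Fintype.card (AdjoinRoot μ)ˣ :=
    Nat.le_of_dvd Fintype.card_pos hdvd
  -- embedding of units into nonzero elements
  set e : (AdjoinRoot μ)ˣ → {s : AdjoinRoot μ // s ≠ 0} := fun v => ⟨(v : AdjoinRoot μ), v.ne_zero⟩
    with he
  have heinj : Function.Injective e := by
    intro v w hvw
    exact Units.ext (congrArg Subtype.val hvw)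
  have hcard' : Fintype.card {s : AdjoinRoot μ // s ≠ 0} = Fintype.card (AdjoinRoot μ) - 1 := by
    simp [Fintype.card_subtype_compl]
  have huble : Fintype.card (AdjoinRoot μ)ˣ ≤ Fintype.card {s : AdjoinRoot μ // s ≠ 0} :=
    Fintype.card_le_of_injective e heinj
  have hcards : Fintype.card (AdjoinRoot μ)ˣ = Fintype.card {s : AdjoinRoot μ // s ≠ 0} := by
    omega
  have hesurj : Function.Surjective e :=
    ((Fintype.bijective_iff_injective_and_card e).mpr ⟨heinj, hcards⟩).2
  -- every nonzero element is a unit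
  have hunit_of_ne : ∀ s : AdjoinRoot μ, s ≠ 0 → IsUnit s := by
    intro s hs
    obtain ⟨v, hv⟩ := hesurj ⟨s, hs⟩
    exact ⟨v, congrArg Subtype.val hv⟩
  -- the element r^c - 1 is nonzero
  have hrc : (AdjoinRoot.root μ) ^ c - 1 ≠ 0 := by
    rw [sub_ne_zero]
    intro hrc1
    have := orderOf_dvd_of_pow_eq_one hrc1
    rw [hord] at this
    exact absurd (Nat.le_of_dvd hc1 this) (by omega)
  have hx : IsUnit ((AdjoinRoot.root μ) ^ c - 1) := hunit_of_ne _ hrc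
  have := hx.map ψ
  rwa [map_sub, map_pow, map_one, hψr] at this

theorem stmt11 {𝔽 : Type*} [Field 𝔽] [Fintype 𝔽] {k h : ℕ}
    (hh1 : 1 ≤ h) (hhk : h < k)
    (q : ℕ) (hq : q = Fintype.card 𝔽)
    (co : Fin (k + h) → 𝔽) (P : Matrix (Fin (k + h)) (Fin (k + h)) 𝔽)
    (hP : P = companionMat co) (hprim : orderOf P = q ^ (k + h) - 1)
    (a b m : ℕ) (ha : 1 ≤ a) (hab : a < b) (hb : b ≤ q ^ (k + h) - 1)
    (hm1 : k + 1 ≤ m) (hm2 : m < k + h)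
    (A : ℕ → Matrix (Fin m) (Fin (2 * k + h)) 𝔽)
    (hA : ∀ c : ℕ, ∀ i : Fin m, ∀ j : Fin (2 * k + h),
      A c i j =
        if hj : (j : ℕ) < k then (if (i : ℕ) = (j : ℕ) then 1 else 0)
        else (P ^ c) ⟨(i : ℕ), by have := i.isLt; omega⟩
          ⟨(j : ℕ) - k, by have := j.isLt; omega⟩) :
    m + k ≤ (Matrix.fromRows (A a) (A b)).rank ∧
      2 * k ≤ subspaceDist (Submodule.span 𝔽 (Set.range (A a)))
        (Submodule.span 𝔽 (Set.range (A b))) := by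
  classical
  subst hq
  set q := Fintype.card 𝔽 with hq
  have hq2 : 2 ≤ q := Fintype.one_lt_card
  have hqn : 2 ≤ q ^ (k + h) := le_trans hq2 (Nat.le_self_pow (by omega) q)
  -- Z = P^b - P^a is invertible
  set Z : Matrix (Fin (k + h)) (Fin (k + h)) 𝔽 := P ^ b - P ^ a with hZdef
  have hP1 : P ^ (q ^ (k + h) - 1) = 1 := hprim ▸ pow_orderOf_eq_one P
  have hPunit : IsUnit P := IsUnit.of_pow_eq_one hP1 (by omega)
  have hZunit : IsUnit Z := by
    have h1 : IsUnit (P ^ (b - a) - 1) :=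
      aux_isUnit_sub (by omega) P (by rw [← hq]; exact hprim) (by omega)
        (by rw [← hq]; omega)
    have h2 : Z = P ^ a * (P ^ (b - a) - 1) := by
      rw [mul_sub, mul_one, ← pow_add, Nat.add_sub_cancel' (by omega : a ≤ b)]
    rw [h2]
    exact (hPunit.pow a).mul h1
  set U := Submodule.span 𝔽 (Set.range (A a)) with hU
  set V := Submodule.span 𝔽 (Set.range (A b)) with hV
  -- coordinate computations
  have hAlt : ∀ (c : ℕ) (i : Fin m) (l : Fin (2 * k + h)), (l : ℕ) < k →
      A c i l = if (i : ℕ) = (l : ℕ) then 1 else 0 := by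
    intro c i l hl
    rw [hA, dif_pos hl]
  have hAcol : ∀ (c : ℕ) (i : Fin m) (t : Fin (k + h)),
      A c i ⟨k + (t : ℕ), by omega⟩ =
        (P ^ c) ⟨(i : ℕ), by have := i.isLt; omega⟩ t := by
    intro c i t
    have hcol : (⟨(k + (t : ℕ)) - k, by omega⟩ : Fin (k + h)) = t := by
      apply Fin.ext; simp
    rw [hA, dif_neg (by simp)]
    exact congrArg _ hcol
  -- the linearly independent family
  set f : Fin k → Fin m := fun i => ⟨(i : ℕ), by omega⟩ with hf
  set v : (Fin k ⊕ Fin m) → (Fin (2 * k + h) → 𝔽) :=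
    Sum.elim (fun i => A a (f i)) (fun j => A b j - A a j) with hv
  have hvmem : ∀ x, v x ∈ U ⊔ V := by
    rintro (i | j)
    · exact Submodule.mem_sup_left (Submodule.subset_span ⟨f i, rfl⟩)
    · exact Submodule.sub_mem _
        (Submodule.mem_sup_right (Submodule.subset_span ⟨j, rfl⟩))
        (Submodule.mem_sup_left (Submodule.subset_span ⟨j, rfl⟩))
  have hli : LinearIndependent 𝔽 v := by
    rw [Fintype.linearIndependent_iff]
    intro g hg
    -- evaluate at coordinates < k to kill the inl coefficients
    have hα : ∀ i : Fin k, g (Sum.inl i) = 0 := by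
      intro i
      have h0 := congrFun hg (⟨(i : ℕ), by omega⟩ : Fin (2 * k + h))
      rw [Finset.sum_apply] at h0
      rw [Fintype.sum_sum_type] at h0
      have hinl : ∀ i' : Fin k,
          (g (Sum.inl i') • v (Sum.inl i')) (⟨(i : ℕ), by omega⟩ : Fin (2 * k + h)) =
            if i' = i then g (Sum.inl i') else 0 := by
        intro i'
        simp only [hv, Sum.elim_inl, Pi.smul_apply, smul_eq_mul]
        rw [hAlt a (f i') _ (by simp)]
        simp only [hf]
        by_cases hii : i' = i
        · subst hii; simp
        · rw [if_neg (by simpa [Fin.val_eq_val] using hii), if_neg hii, mul_zero]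
      have hinr : ∀ j : Fin m,
          (g (Sum.inr j) • v (Sum.inr j)) (⟨(i : ℕ), by omega⟩ : Fin (2 * k + h)) = 0 := by
        intro j
        simp only [hv, Sum.elim_inr, Pi.smul_apply, Pi.sub_apply, smul_eq_mul]
        rw [hAlt a j _ (by simp), hAlt b j _ (by simp)]
        simp
      rw [Finset.sum_congr rfl (fun i' _ => hinl i'),
        Finset.sum_congr rfl (fun j _ => hinr j)] at h0
      simpa using h0
    have hβ : ∀ j : Fin m, g (Sum.inr j) = 0 := by
      have hzsum : ∑ j : Fin m, g (Sum.inr j) • Z (Fin.castLE (le_of_lt hm2) j) = 0 := by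
        funext t
        have h0 := congrFun hg (⟨k + (t : ℕ), by omega⟩ : Fin (2 * k + h))
        rw [Finset.sum_apply, Fintype.sum_sum_type] at h0
        have hinl : ∀ i' : Fin k,
            (g (Sum.inl i') • v (Sum.inl i')) (⟨k + (t : ℕ), by omega⟩ : Fin (2 * k + h)) = 0 := by
          intro i'
          rw [hα i']
          simp
        have hinr : ∀ j : Fin m,
            (g (Sum.inr j) • v (Sum.inr j)) (⟨k + (t : ℕ), by omega⟩ : Fin (2 * k + h)) =
              g (Sum.inr j) * Z (Fin.castLE (le_of_lt hm2) j) t := by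
          intro j
          simp only [hv, Sum.elim_inr, Pi.smul_apply, Pi.sub_apply, smul_eq_mul]
          rw [hAcol b j t, hAcol a j t]
          rw [hZdef]
          simp only [Matrix.sub_apply]
          congr 1
        rw [Finset.sum_congr rfl (fun i' _ => hinl i'),
          Finset.sum_congr rfl (fun j _ => hinr j)] at h0
        simp only [Finset.sum_const_zero, zero_add] at h0
        rw [Finset.sum_apply]
        simpa using h0
      have hZli : LinearIndependent 𝔽 (fun i => Z i) :=
        Matrix.linearIndependent_rows_iff_isUnit.mpr hZunit
      have hZli' := hZli.comp (Fin.castLE (le_of_lt hm2)) (Fin.castLE_injective _)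
      rw [Fintype.linearIndependent_iff] at hZli'
      exact hZli' (fun j => g (Sum.inr j)) hzsum
    rintro (i | j)
    · exact hα i
    · exact hβ j
  -- dimension bounds
  have hspan : Module.finrank 𝔽 ↥(Submodule.span 𝔽 (Set.range v)) = k + m := by
    rw [finrank_span_eq_card hli]
    simp
  have hWge : k + m ≤ Module.finrank 𝔽 ↥(U ⊔ V) := by
    rw [← hspan]
    exact Submodule.finrank_mono (Submodule.span_le.mpr (Set.range_subset_iff.mpr hvmem))
  have hrange : Set.range (Matrix.fromRows (A a) (A b)) =
      Set.range (A a) ∪ Set.range (A b) := Set.Sum.elim_range _ _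
  have hrank : (Matrix.fromRows (A a) (A b)).rank = Module.finrank 𝔽 ↥(U ⊔ V) := by
    rw [Matrix.rank_eq_finrank_span_row, Matrix.row, hrange, Submodule.span_union]
  have hUle : Module.finrank 𝔽 ↥U ≤ m := by
    rw [hU, show Set.range (A a) = Set.range (A a).row from rfl, ← Matrix.rank_eq_finrank_span_row]
    exact Matrix.rank_le_height (A a)
  have hVle : Module.finrank 𝔽 ↥V ≤ m := by
    rw [hV, show Set.range (A b) = Set.range (A b).row from rfl, ← Matrix.rank_eq_finrank_span_row]
    exact Matrix.rank_le_height (A b)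
  have hsupinf := Submodule.finrank_sup_add_finrank_inf_eq U V
  constructor
  · omega
  · rw [subspaceDist]
    omega
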